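/- arXiv:1610.07016 — 3 statements merged into one kernel-verified Lean document; each statement's English description precedes it below -/
import Mathlib

section
/- Let Ω ⊆ ℂⁿ be a bounded open set with boundary distance δ, let s ∈ (0, 2n), and let g : Ω → ℂ be measurable. Assume there are constants C₁, C₂ > 0 such that (i) ∫_{{δ ≤ ε}} |g|² dV ≤ C₁ ε^s for all ε ∈ (0,1], and (ii) |g(z)|² ≤ C₂ δ(z)^{s − 2n} for all z ∈ Ω. Then for every τ with 0 < τ < 2s/(2n − s), the integral ∫_Ω |g|^{2+τ} dV is finite. -/
open MeasureTheory

noncomputable instance (n : ℕ) : MeasurableSpace (EuclideanSpace ℂ (Fin n)) := borel _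
instance (n : ℕ) : BorelSpace (EuclideanSpace ℂ (Fin n)) := ⟨rfl⟩
noncomputable instance (n : ℕ) : InnerProductSpace ℝ (EuclideanSpace ℂ (Fin n)) :=
  InnerProductSpace.rclikeToReal ℂ _

theorem stmt4 (n : ℕ) (hn : 1 ≤ n) (Ω : Set (EuclideanSpace ℂ (Fin n))) (hΩ : IsOpen Ω)
    (hb : Bornology.IsBounded Ω) (s : ℝ) (hs0 : 0 < s) (hs : s < 2 * n)
    (g : EuclideanSpace ℂ (Fin n) → ℂ) (hg : Measurable g)
    (C₁ C₂ : ℝ) (hC₁ : 0 < C₁) (hC₂ : 0 < C₂)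
    (h1 : ∀ ε ∈ Set.Ioc (0 : ℝ) 1,
      ∫⁻ z in {z ∈ Ω | Metric.infDist z (frontier Ω) ≤ ε},
        ENNReal.ofReal (‖g z‖ ^ (2 : ℝ)) ≤ ENNReal.ofReal (C₁ * ε ^ s))
    (h2 : ∀ z ∈ Ω, ‖g z‖ ^ (2 : ℝ) ≤ C₂ * Metric.infDist z (frontier Ω) ^ (s - 2 * n))
    (τ : ℝ) (hτ0 : 0 < τ) (hτ : τ < 2 * s / (2 * n - s)) :
    ∫⁻ z in Ω, ENNReal.ofReal (‖g z‖ ^ (2 + τ)) < ⊤ := by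
  classical
  rcases Set.eq_empty_or_nonempty Ω with hΩe | hΩne
  · simp [hΩe]
  set δ : EuclideanSpace ℂ (Fin n) → ℝ := fun z => Metric.infDist z (frontier Ω) with hδdef
  haveI : Nontrivial (EuclideanSpace ℂ (Fin n)) := by
    refine nontrivial_of_ne (EuclideanSpace.single ⟨0, hn⟩ (1 : ℂ)) 0 ?_
    intro h
    have := congrArg (fun v : EuclideanSpace ℂ (Fin n) => v ⟨0, hn⟩) h
    simp [EuclideanSpace.single_apply] at this
  have hfr : (frontier Ω).Nonempty := by
    rw [nonempty_frontier_iff]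
    refine ⟨hΩne, fun h => NormedSpace.unbounded_univ ℝ _ (h ▸ hb)⟩
  have hδpos : ∀ z ∈ Ω, 0 < δ z := by
    intro z hz
    refine (isClosed_frontier.notMem_iff_infDist_pos hfr).1 ?_
    intro hzf
    rw [hΩ.frontier_eq] at hzf
    exact hzf.2 hz
  have hδcont : Continuous δ := Metric.continuous_infDist_pt (frontier Ω)
  have hd0 : (0:ℝ) < 2 * n - s := by linarith
  set α : ℝ := τ * (2 * n - s) / 2 with hαdef
  have hα0 : 0 < α := by positivity
  have hαs : α < s := by
    have h' : τ * (2 * n - s) < 2 * s := (lt_div_iff₀ hd0).1 hτ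
    rw [hαdef]; linarith
  have hhalf : (0:ℝ) < 1/2 := by norm_num
  -- the regions
  set B : Set (EuclideanSpace ℂ (Fin n)) := {z ∈ Ω | 1/2 < δ z} with hBdef
  set A : ℕ → Set (EuclideanSpace ℂ (Fin n)) :=
    fun k => {z ∈ Ω | (1/2:ℝ)^(k+2) < δ z ∧ δ z ≤ (1/2:ℝ)^(k+1)} with hAdef
  have hcover : Ω ⊆ B ∪ ⋃ k, A k := by
    intro z hz
    rcases lt_or_ge (1/2 : ℝ) (δ z) with h | h
    · exact Or.inl ⟨hz, h⟩
    · refine Or.inr ?_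
      have hex : ∃ m : ℕ, (1/2:ℝ)^(m+2) < δ z := by
        obtain ⟨m, hm⟩ := exists_pow_lt_of_lt_one (hδpos z hz) (by norm_num : (1/2:ℝ) < 1)
        exact ⟨m, lt_of_le_of_lt (by
          apply pow_le_pow_of_le_one (by norm_num) (by norm_num); omega) hm⟩
      have h₁ : (1/2:ℝ)^(Nat.find hex + 2) < δ z := Nat.find_spec hex
      have h₂ : δ z ≤ (1/2:ℝ)^(Nat.find hex + 1) := by
        rcases Nat.eq_zero_or_pos (Nat.find hex) with h0 | hpos
        · rw [h0]; simpa using h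
        · have hmin := Nat.find_min hex (m := Nat.find hex - 1) (by omega)
          push_neg at hmin
          have heq : Nat.find hex - 1 + 2 = Nat.find hex + 1 := by omega
          rwa [heq] at hmin
      exact Set.mem_iUnion.2 ⟨Nat.find hex, ⟨hz, h₁, h₂⟩⟩
  -- measurability of the auxiliary function
  have hmeas2 : Measurable fun z => ENNReal.ofReal (‖g z‖ ^ (2:ℝ)) :=
    ((Real.continuous_rpow_const (by norm_num)).measurable.comp hg.norm).ennreal_ofReal
  -- bound on B
  set M₂ : ℝ := C₂ * (1/2:ℝ) ^ (s - 2*n) with hM₂def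
  have hM₂0 : 0 < M₂ := mul_pos hC₂ (Real.rpow_pos_of_pos hhalf _)
  have hBbound : ∀ z ∈ B, ENNReal.ofReal (‖g z‖ ^ (2 + τ)) ≤
      ENNReal.ofReal (M₂ ^ ((2+τ)/2)) := by
    intro z hz
    apply ENNReal.ofReal_le_ofReal
    have h2z := h2 z hz.1
    have hg2 : ‖g z‖ ^ (2:ℝ) ≤ M₂ := by
      refine h2z.trans ?_
      rw [hM₂def]
      exact mul_le_mul_of_nonneg_left
        (Real.rpow_le_rpow_of_nonpos hhalf hz.2.le (by linarith)) hC₂.le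
    calc ‖g z‖ ^ (2 + τ) = (‖g z‖ ^ (2:ℝ)) ^ ((2+τ)/2) := by
          rw [← Real.rpow_mul (norm_nonneg _)]; congr 1; ring
      _ ≤ M₂ ^ ((2+τ)/2) := by
          apply Real.rpow_le_rpow (by positivity) hg2 (by positivity)
  have hBint : ∫⁻ z in B, ENNReal.ofReal (‖g z‖ ^ (2 + τ)) < ⊤ := by
    calc ∫⁻ z in B, ENNReal.ofReal (‖g z‖ ^ (2 + τ))
        ≤ ∫⁻ _ in B, ENNReal.ofReal (M₂ ^ ((2+τ)/2)) :=
          setLIntegral_mono measurable_const hBbound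
      _ = ENNReal.ofReal (M₂ ^ ((2+τ)/2)) * volume B := setLIntegral_const _ _
      _ ≤ ENNReal.ofReal (M₂ ^ ((2+τ)/2)) * volume Ω := by
          have hBsub : B ⊆ Ω := fun z hz => hz.1
          exact mul_le_mul_right (measure_mono hBsub) _
      _ < ⊤ := ENNReal.mul_lt_top ENNReal.ofReal_lt_top hb.measure_lt_top
  -- shell bounds
  set K : ℝ := C₂ ^ (τ/2) * C₁ * (1/2:ℝ) ^ (s - 2*α) with hKdef
  have hK0 : 0 < K := by
    have := Real.rpow_pos_of_pos hC₂ (τ/2)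
    have := Real.rpow_pos_of_pos hhalf (s - 2*α)
    positivity
  set r : ℝ := (1/2:ℝ) ^ (s - α) with hrdef
  have hr0 : 0 < r := Real.rpow_pos_of_pos hhalf _
  have hr1 : r < 1 := Real.rpow_lt_one hhalf.le (by norm_num) (by linarith)
  have hshell : ∀ k : ℕ, ∫⁻ z in A k, ENNReal.ofReal (‖g z‖ ^ (2 + τ)) ≤
      ENNReal.ofReal K * ENNReal.ofReal r ^ k := by
    intro k
    set c : ℝ := C₂ ^ (τ/2) * ((1/2:ℝ)^(k+2)) ^ (-α) with hcdef
    have hc0 : 0 < c := mul_pos (Real.rpow_pos_of_pos hC₂ _)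
      (Real.rpow_pos_of_pos (by positivity) _)
    have hpoint : ∀ z ∈ A k, ENNReal.ofReal (‖g z‖ ^ (2 + τ)) ≤
        ENNReal.ofReal c * ENNReal.ofReal (‖g z‖ ^ (2:ℝ)) := by
      intro z hz
      rw [← ENNReal.ofReal_mul hc0.le]
      apply ENNReal.ofReal_le_ofReal
      have hδz0 : (0:ℝ) < (1/2:ℝ)^(k+2) := by positivity
      have hgτ : ‖g z‖ ^ τ ≤ c := by
        have e1 : ‖g z‖ ^ τ = (‖g z‖ ^ (2:ℝ)) ^ (τ/2) := by
          rw [← Real.rpow_mul (norm_nonneg _)]; congr 1; ring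
        rw [e1, hcdef]
        calc (‖g z‖ ^ (2:ℝ)) ^ (τ/2)
            ≤ (C₂ * δ z ^ (s - 2*n)) ^ (τ/2) :=
              Real.rpow_le_rpow (by positivity) (h2 z hz.1) (by positivity)
          _ = C₂ ^ (τ/2) * (δ z ^ (s - 2*n)) ^ (τ/2) :=
              Real.mul_rpow hC₂.le (Real.rpow_nonneg (hδpos z hz.1).le _)
          _ ≤ C₂ ^ (τ/2) * ((1/2:ℝ)^(k+2)) ^ (-α) := by
              apply mul_le_mul_of_nonneg_left _ (Real.rpow_nonneg hC₂.le _)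
              have e2 : (δ z ^ (s - 2*(n:ℝ))) ^ (τ/2) = δ z ^ (-α) := by
                rw [← Real.rpow_mul (hδpos z hz.1).le]; congr 1; rw [hαdef]; ring
              rw [e2]
              exact Real.rpow_le_rpow_of_nonpos hδz0 hz.2.1.le (by linarith)
      calc ‖g z‖ ^ (2 + τ) = ‖g z‖ ^ (2:ℝ) * ‖g z‖ ^ τ := by
            rw [← Real.rpow_add' (norm_nonneg _) (by positivity)]
        _ ≤ ‖g z‖ ^ (2:ℝ) * c := by
            apply mul_le_mul_of_nonneg_left hgτ (by positivity)
        _ = c * ‖g z‖ ^ (2:ℝ) := by ring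
    have hsub : A k ⊆ {z ∈ Ω | δ z ≤ (1/2:ℝ)^(k+1)} := fun z hz => ⟨hz.1, hz.2.2⟩
    have hεmem : ((1/2:ℝ)^(k+1)) ∈ Set.Ioc (0:ℝ) 1 :=
      ⟨by positivity, pow_le_one₀ (by norm_num) (by norm_num)⟩
    calc ∫⁻ z in A k, ENNReal.ofReal (‖g z‖ ^ (2 + τ))
        ≤ ∫⁻ z in A k, ENNReal.ofReal c * ENNReal.ofReal (‖g z‖ ^ (2:ℝ)) :=
          setLIntegral_mono (measurable_const.mul hmeas2) hpoint
      _ = ENNReal.ofReal c * ∫⁻ z in A k, ENNReal.ofReal (‖g z‖ ^ (2:ℝ)) :=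
          lintegral_const_mul' _ _ ENNReal.ofReal_ne_top
      _ ≤ ENNReal.ofReal c * ENNReal.ofReal (C₁ * ((1/2:ℝ)^(k+1)) ^ s) := by
          gcongr
          exact le_trans (lintegral_mono_set hsub) (h1 _ hεmem)
      _ = ENNReal.ofReal (c * (C₁ * ((1/2:ℝ)^(k+1)) ^ s)) :=
          (ENNReal.ofReal_mul hc0.le).symm
      _ = ENNReal.ofReal (K * r ^ k) := by
          congr 1
          rw [hcdef, hKdef, hrdef]
          rw [← Real.rpow_natCast (1/2:ℝ) (k+2), ← Real.rpow_natCast (1/2:ℝ) (k+1),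
            ← Real.rpow_natCast ((1/2:ℝ) ^ (s - α)) k,
            ← Real.rpow_mul hhalf.le, ← Real.rpow_mul hhalf.le, ← Real.rpow_mul hhalf.le]
          push_cast
          rw [show C₂ ^ (τ/2) * (1/2:ℝ) ^ ((↑k+2) * -α) * (C₁ * (1/2:ℝ) ^ ((↑k+1) * s))
              = C₂ ^ (τ/2) * C₁ * ((1/2:ℝ) ^ ((↑k+2) * -α) * (1/2:ℝ) ^ ((↑k+1) * s)) by ring,
            ← Real.rpow_add hhalf, show ((k:ℝ)+2) * -α + ((k:ℝ)+1) * s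
              = (s - 2*α) + (s - α) * k by ring, Real.rpow_add hhalf]
          ring
      _ ≤ ENNReal.ofReal K * ENNReal.ofReal r ^ k := by
          rw [ENNReal.ofReal_mul hK0.le, ENNReal.ofReal_pow hr0.le]
  -- assemble
  have hAint : ∫⁻ z in ⋃ k, A k, ENNReal.ofReal (‖g z‖ ^ (2 + τ)) < ⊤ := by
    calc ∫⁻ z in ⋃ k, A k, ENNReal.ofReal (‖g z‖ ^ (2 + τ))
        ≤ ∑' k, ∫⁻ z in A k, ENNReal.ofReal (‖g z‖ ^ (2 + τ)) := lintegral_iUnion_le _ _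
      _ ≤ ∑' k, ENNReal.ofReal K * ENNReal.ofReal r ^ k := ENNReal.tsum_le_tsum hshell
      _ = ENNReal.ofReal K * ∑' k, ENNReal.ofReal r ^ k := ENNReal.tsum_mul_left
      _ < ⊤ := by
          rw [ENNReal.tsum_geometric]
          refine ENNReal.mul_lt_top ENNReal.ofReal_lt_top ?_
          rw [ENNReal.inv_lt_top]
          exact tsub_pos_of_lt (ENNReal.ofReal_lt_one.2 hr1)
  calc ∫⁻ z in Ω, ENNReal.ofReal (‖g z‖ ^ (2 + τ))
      ≤ ∫⁻ z in B ∪ ⋃ k, A k, ENNReal.ofReal (‖g z‖ ^ (2 + τ)) := lintegral_mono_set hcover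
    _ ≤ (∫⁻ z in B, ENNReal.ofReal (‖g z‖ ^ (2 + τ)))
        + ∫⁻ z in ⋃ k, A k, ENNReal.ofReal (‖g z‖ ^ (2 + τ)) := lintegral_union_le _ _ _
    _ < ⊤ := ENNReal.add_lt_top.2 ⟨hBint, hAint⟩
end

section
/- Let Ω₁, Ω₂ ⊆ ℂⁿ be bounded open sets with boundary distance functions δ₁, δ₂. Let F : closure(Ω₁) → closure(Ω₂) be a map with F(Ω₁) ⊆ Ω₂ and F(∂Ω₁) ⊆ ∂Ω₂, which is γ-Hölder continuous with constant L on closure(Ω₁) for some 0 < γ ≤ 1. Suppose ρ₂ : Ω₂ → ℝ satisfies −ρ₂(w) ≤ C·δ₂(w)^α for all w ∈ Ω₂, for some constants C, α > 0. Then ρ₁ := ρ₂ ∘ F satisfies −ρ₁(z) ≤ C·L^α·δ₁(z)^{γα} for all z ∈ Ω₁. -/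
theorem stmt7 (n : ℕ) (Ω₁ Ω₂ : Set (EuclideanSpace ℂ (Fin n)))
    (h₁ : IsOpen Ω₁) (h₂ : IsOpen Ω₂)
    (hb₁ : Bornology.IsBounded Ω₁) (hb₂ : Bornology.IsBounded Ω₂)
    (F : EuclideanSpace ℂ (Fin n) → EuclideanSpace ℂ (Fin n))
    (hmap : Set.MapsTo F Ω₁ Ω₂) (hbd : Set.MapsTo F (frontier Ω₁) (frontier Ω₂))
    (γ L : ℝ) (hγ0 : 0 < γ) (hγ1 : γ ≤ 1) (hL : 0 < L)
    (hHolder : ∀ x ∈ closure Ω₁, ∀ y ∈ closure Ω₁, dist (F x) (F y) ≤ L * dist x y ^ γ)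
    (ρ₂ : EuclideanSpace ℂ (Fin n) → ℝ) (C α : ℝ) (hC : 0 < C) (hα : 0 < α)
    (hρ₂ : ∀ w ∈ Ω₂, -ρ₂ w ≤ C * Metric.infDist w (frontier Ω₂) ^ α) :
    ∀ z ∈ Ω₁, -(ρ₂ (F z)) ≤ C * L ^ α * Metric.infDist z (frontier Ω₁) ^ (γ * α) := by
  intro z hz
  have hz' : z ∈ closure Ω₁ := subset_closure hz
  have key : Metric.infDist (F z) (frontier Ω₂) ≤ L * Metric.infDist z (frontier Ω₁) ^ γ := by
    rcases (frontier Ω₁).eq_empty_or_nonempty with he | hne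
    · -- frontier Ω₁ empty : Ω₁ clopen nonempty, so space is a point
      rcases subsingleton_or_nontrivial (EuclideanSpace ℂ (Fin n)) with hsub | hnt
      · have hΩ₂ : Ω₂ = Set.univ := by
          apply Set.eq_univ_of_forall
          intro x
          have := hmap hz
          rwa [Subsingleton.elim x (F z)]
        rw [hΩ₂, frontier_univ, Metric.infDist_empty, he, Metric.infDist_empty,
          Real.zero_rpow hγ0.ne', mul_zero]
      · exfalso
        have hclopen : IsClopen Ω₁ := isClopen_iff_frontier_eq_empty.mpr he
        rcases isClopen_iff.mp hclopen with h | h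
        · rw [h] at hz; exact hz
        · rw [h] at hb₁
          exact NormedSpace.unbounded_univ ℂ (EuclideanSpace ℂ (Fin n)) hb₁
    · have hcomp : IsCompact (frontier Ω₁) := by
        refine Metric.isCompact_of_isClosed_isBounded isClosed_frontier ?_
        exact hb₁.closure.subset (frontier_subset_closure)
      obtain ⟨w, hw, hdw⟩ := hcomp.exists_infDist_eq_dist hne z
      have hw' : w ∈ closure Ω₁ := frontier_subset_closure hw
      calc Metric.infDist (F z) (frontier Ω₂) ≤ dist (F z) (F w) :=
            Metric.infDist_le_dist_of_mem (hbd hw)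
        _ ≤ L * dist z w ^ γ := hHolder z hz' w hw'
        _ = L * Metric.infDist z (frontier Ω₁) ^ γ := by rw [hdw]
  have h2 : Metric.infDist (F z) (frontier Ω₂) ^ α
      ≤ (L * Metric.infDist z (frontier Ω₁) ^ γ) ^ α :=
    Real.rpow_le_rpow Metric.infDist_nonneg key hα.le
  have h3 : (L * Metric.infDist z (frontier Ω₁) ^ γ) ^ α
      = L ^ α * Metric.infDist z (frontier Ω₁) ^ (γ * α) := by
    rw [Real.mul_rpow hL.le (Real.rpow_nonneg Metric.infDist_nonneg γ),
      ← Real.rpow_mul Metric.infDist_nonneg]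
  calc -(ρ₂ (F z)) ≤ C * Metric.infDist (F z) (frontier Ω₂) ^ α := hρ₂ (F z) (hmap hz)
    _ ≤ C * (L ^ α * Metric.infDist z (frontier Ω₁) ^ (γ * α)) := by
        rw [← h3]; exact mul_le_mul_of_nonneg_left h2 hC.le
    _ = C * L ^ α * Metric.infDist z (frontier Ω₁) ^ (γ * α) := by ring
end

section
/- Let Ω ⊆ ℂⁿ be open and connected containing 0, let a₁, …, a_n > 0, and suppose that for every θ ∈ ℝ and z ∈ Ω, the point F_θ(z) = (e^{i a₁ θ} z₁, …, e^{i a_n θ} z_n) lies in Ω. If g : Ω → ℂ is holomorphic and satisfies g(F_θ(z)) = g(z) for all θ ∈ ℝ and z ∈ Ω, then g is constant on Ω. -/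
open Complex Metric Filter Topology

lemma aux_slice {E : Type*} [NormedAddCommGroup E] [NormedSpace ℂ E] {g : E → ℂ} {B : Set E}
    (hB : IsOpen B) (hconv : Convex ℝ B) (hg : DifferentiableOn ℂ g B) {c : ℂ} {z' : E} {ρ : ℝ}
    (hρ : 0 < ρ) (hz' : z' ∈ B) (hgc : ∀ w ∈ ball z' ρ, g w = c) {p : E} (hp : p ∈ B) :
    g p = c := by
  set L : ℂ → E := fun lam => z' + lam • (p - z') with hLdef
  have hLdiff : Differentiable ℂ L := by
    apply Differentiable.const_add
    exact differentiable_id.smul_const (p - z')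
  have hLcont : Continuous L := hLdiff.continuous
  set V : Set ℂ := L ⁻¹' B with hVdef
  have hVo : IsOpen V := hB.preimage hLcont
  have hseg : ∀ t : ℝ, t ∈ Set.Icc (0:ℝ) 1 → L (t : ℂ) ∈ B := by
    intro t ht
    have h1 : L (t : ℂ) = (1 - t) • z' + t • p := by
      rw [hLdef]
      simp only
      rw [Complex.coe_smul]
      module
    rw [h1]
    exact hconv hz' hp (by linarith [ht.2]) ht.1 (by ring)
  set S : Set ℂ := (fun t : ℝ => (t : ℂ)) '' Set.Icc 0 1 with hSdef
  have hS0 : (0:ℂ) ∈ S := ⟨0, by simp⟩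
  have hS1 : (1:ℂ) ∈ S := ⟨1, by simp⟩
  have hSV : S ⊆ V := by
    rintro w ⟨t, ht, rfl⟩
    exact hseg t ht
  have hSconn : IsPreconnected S :=
    (isPreconnected_Icc).image _ (Complex.continuous_ofReal.continuousOn)
  set C : Set ℂ := connectedComponentIn V 0 with hCdef
  have h0V : (0:ℂ) ∈ V := hSV hS0
  have hCo : IsOpen C := hVo.connectedComponentIn
  have hCconn : IsPreconnected C := isPreconnected_connectedComponentIn
  have h0C : (0:ℂ) ∈ C := mem_connectedComponentIn h0V
  have h1C : (1:ℂ) ∈ C := hSconn.subset_connectedComponentIn hS0 hSV hS1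
  have hCV : C ⊆ V := (connectedComponentIn_subset V 0).trans (le_refl _)
  have hGdiff : DifferentiableOn ℂ (g ∘ L) C :=
    hg.comp hLdiff.differentiableOn (fun w hw => hCV hw)
  have hGanal := hGdiff.analyticOnNhd hCo
  have hfreq : ∃ᶠ w in 𝓝[≠] (0:ℂ), (g ∘ L) w = c := by
    apply Eventually.frequently
    apply eventually_nhdsWithin_of_eventually_nhds
    have hL0 : L 0 = z' := by simp [hLdef]
    have : ∀ᶠ w in 𝓝 (0:ℂ), L w ∈ ball z' ρ := by
      have := hLcont.continuousAt (x := (0:ℂ))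
      apply this.preimage_mem_nhds
      rw [hL0]
      exact ball_mem_nhds z' hρ
    filter_upwards [this] with w hw
    exact hgc _ hw
  have hEq : Set.EqOn (g ∘ L) (fun _ => c) C :=
    hGanal.eqOn_of_preconnected_of_frequently_eq analyticOnNhd_const hCconn h0C hfreq
  have := hEq h1C
  simpa [hLdef] using this

lemma aux_near_zero (n : ℕ) (Ω : Set (EuclideanSpace ℂ (Fin n))) (hΩ : IsOpen Ω)
    (a : Fin n → ℝ) (ha : ∀ j, 0 < a j)
    (g : EuclideanSpace ℂ (Fin n) → ℂ) (hg : DifferentiableOn ℂ g Ω)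
    (hginv : ∀ (θ : ℝ), ∀ z ∈ Ω,
      g (WithLp.toLp 2 (fun j => Complex.exp (Complex.I * (a j) * θ) * z j) : EuclideanSpace ℂ (Fin n)) = g z)
    (r : ℝ) (hr : 0 < r) (hball : ball (0 : EuclideanSpace ℂ (Fin n)) r ⊆ Ω)
    (h0 : (0 : EuclideanSpace ℂ (Fin n)) ∈ Ω)
    (z : EuclideanSpace ℂ (Fin n)) (hz : z ∈ ball (0 : EuclideanSpace ℂ (Fin n)) r) :
    g z = g 0 := by
  by_cases hz0 : z = 0
  · rw [hz0]
  set A : ℝ := 1 + ∑ j, a j with hA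
  have hsum : (0:ℝ) ≤ ∑ j, a j := Finset.sum_nonneg fun j _ => (ha j).le
  have hA1 : (1:ℝ) ≤ A := by simp [hA]; linarith
  have hAj : ∀ j, a j ≤ A := by
    intro j
    have := Finset.single_le_sum (f := a) (fun i _ => (ha i).le) (Finset.mem_univ j)
    simp [hA]; linarith
  have hzr : ‖z‖ < r := mem_ball_zero_iff.mp hz
  have hzpos : 0 < ‖z‖ := norm_pos_iff.mpr hz0
  set ρ : ℝ := r / ‖z‖ with hρdef
  have hρ : 1 < ρ := (one_lt_div hzpos).mpr hzr
  set δ : ℝ := Real.log ρ / (2 * A) with hδdef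
  have hδ : 0 < δ := div_pos (Real.log_pos hρ) (by linarith)
  set K : ℝ := Real.exp (A * δ) with hKdef
  have hAδ : A * δ = Real.log ρ / 2 := by
    rw [hδdef]; field_simp
  have hK1 : 1 < K := Real.one_lt_exp_iff.mpr (by positivity)
  have hKsq : K * K = ρ := by
    have hlog : A * δ + A * δ = Real.log ρ := by rw [hAδ]; ring
    rw [hKdef, ← Real.exp_add, hlog, Real.exp_log (lt_trans one_pos hρ)]
  have hKr : K * ‖z‖ < r := by
    have : r = ρ * ‖z‖ := by rw [hρdef, div_mul_cancel₀ r hzpos.ne']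
    nlinarith
  set U : Set ℂ := {w | -δ < w.im} with hUdef
  set φ : ℂ → EuclideanSpace ℂ (Fin n) :=
    fun w => (WithLp.toLp 2 (fun j => Complex.exp (Complex.I * (a j) * w) * z j) : EuclideanSpace ℂ (Fin n))
    with hφdef
  have hφd : Differentiable ℂ φ := by
    have h : Differentiable ℂ
        (fun w : ℂ => (fun j => Complex.exp (Complex.I * (a j) * w) * z j : Fin n → ℂ)) := by
      rw [differentiable_pi]
      intro j
      exact ((Complex.differentiable_exp.comp
        ((differentiable_const _).mul differentiable_id)).mul (differentiable_const _))
    exact ((PiLp.continuousLinearEquiv 2 ℂ (fun _ : Fin n => ℂ)).symm.differentiable).comp h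
  have hnormexp : ∀ (b : ℝ) (w : ℂ), ‖Complex.exp (Complex.I * b * w)‖ = Real.exp (-(b * w.im)) := by
    intro b w
    rw [Complex.norm_exp]
    congr 1
    simp [Complex.mul_re, Complex.mul_im]
  have hφnorm : ∀ w ∈ U, ‖φ w‖ ≤ K * ‖z‖ := by
    intro w hw
    have hwim : -δ ≤ w.im := le_of_lt hw
    have hcoord : ∀ j, ‖φ w j‖ ≤ K * ‖z j‖ := by
      intro j
      have h1 : ‖φ w j‖ = Real.exp (-(a j * w.im)) * ‖z j‖ := by
        rw [hφdef]; simp only [PiLp.toLp_apply, norm_mul, hnormexp]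
      rw [h1]
      apply mul_le_mul_of_nonneg_right _ (norm_nonneg _)
      rw [hKdef]
      apply Real.exp_le_exp.mpr
      have := hAj j
      nlinarith [(ha j).le]
    rw [EuclideanSpace.norm_eq, EuclideanSpace.norm_eq z]
    have hK0 : (0:ℝ) ≤ K := le_of_lt (lt_trans one_pos hK1)
    rw [← Real.sqrt_sq hK0, ← Real.sqrt_mul (sq_nonneg K)]
    apply Real.sqrt_le_sqrt
    rw [Finset.mul_sum]
    apply Finset.sum_le_sum
    intro j _
    have := hcoord j
    nlinarith [norm_nonneg (φ w j), norm_nonneg (z j)]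
  have hzΩ : z ∈ Ω := hball hz
  have hmaps : ∀ w ∈ U, φ w ∈ Ω := fun w hw =>
    hball (mem_ball_zero_iff.mpr (lt_of_le_of_lt (hφnorm w hw) hKr))
  have hUo : IsOpen U := isOpen_Ioi.preimage Complex.continuous_im
  have hUconv : Convex ℝ U := convex_halfSpace_im_gt _
  have hGdiff : DifferentiableOn ℂ (g ∘ φ) U :=
    hg.comp hφd.differentiableOn (fun w hw => hmaps w hw)
  have hGanal := hGdiff.analyticOnNhd hUo
  have hreal : ∀ θ : ℝ, (g ∘ φ) (θ : ℂ) = g z := fun θ => hginv θ z hzΩ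
  have hu : Tendsto (fun k : ℕ => ((((k:ℝ)+1)⁻¹ : ℝ) : ℂ)) atTop (𝓝[≠] 0) := by
    apply tendsto_nhdsWithin_of_tendsto_nhds_of_eventually_within
    · have h2 : Tendsto (fun k : ℕ => (((k:ℝ)+1)⁻¹ : ℝ)) atTop (𝓝 0) := by
        simpa [one_div] using tendsto_one_div_add_atTop_nhds_zero_nat (𝕜 := ℝ)
      exact ((Complex.continuous_ofReal.tendsto 0).comp h2).congr (fun k => by simp [Function.comp])
    · filter_upwards with k
      simp only [Set.mem_compl_iff, Set.mem_singleton_iff, ne_eq]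
      norm_cast
      positivity
  have hfreq : ∃ᶠ w in 𝓝[≠] (0:ℂ), (g ∘ φ) w = g z :=
    hu.frequently ((Eventually.of_forall fun k : ℕ => hreal (((k:ℝ)+1)⁻¹)).frequently)
  have h0U : (0:ℂ) ∈ U := by simp [hUdef]; exact hδ
  have hEq : Set.EqOn (g ∘ φ) (fun _ => g z) U :=
    hGanal.eqOn_of_preconnected_of_frequently_eq analyticOnNhd_const
      hUconv.isPreconnected h0U hfreq
  have hvert : ∀ t : ℝ, 0 ≤ t → g (φ (Complex.I * t)) = g z := by
    intro t ht
    have hmem : (Complex.I * (t:ℂ)) ∈ U := by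
      simp [hUdef, Complex.mul_im]
      linarith
    exact hEq hmem
  have hpi : Tendsto (fun t : ℝ =>
      (fun j => Complex.exp (Complex.I * (a j) * (Complex.I * t)) * z j : Fin n → ℂ))
      atTop (𝓝 0) := by
    rw [tendsto_pi_nhds]
    intro j
    simp only [Pi.zero_apply]
    apply squeeze_zero_norm (a := fun t : ℝ => Real.exp (-(a j * t)) * ‖z j‖)
    · intro t
      rw [norm_mul, hnormexp]
      apply le_of_eq
      congr 2
      simp [Complex.mul_im]
    · have hb : Tendsto (fun t : ℝ => -(a j * t)) atTop atBot := by
        rw [tendsto_neg_atBot_iff]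
        exact Tendsto.const_mul_atTop (ha j) tendsto_id
      have := (Real.tendsto_exp_atBot.comp hb).mul_const ‖z j‖
      simpa using this
  have htend : Tendsto (fun t : ℝ => φ (Complex.I * t)) atTop (𝓝 0) := by
    have hc := ((PiLp.continuousLinearEquiv 2 ℂ (fun _ : Fin n => ℂ)).symm.continuous.tendsto 0).comp hpi
    exact hc
  have hcont : ContinuousAt g 0 := (hg.differentiableAt (hΩ.mem_nhds h0)).continuousAt
  have h1 : Tendsto (fun t : ℝ => g (φ (Complex.I * t))) atTop (𝓝 (g 0)) :=
    hcont.tendsto.comp htend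
  have h2 : Tendsto (fun t : ℝ => g (φ (Complex.I * t))) atTop (𝓝 (g z)) := by
    apply Tendsto.congr' _ tendsto_const_nhds
    filter_upwards [eventually_ge_atTop (0:ℝ)] with t ht
    exact (hvert t ht).symm
  exact tendsto_nhds_unique h2 h1

lemma aux_propagate {E : Type*} [NormedAddCommGroup E] [NormedSpace ℂ E] {g : E → ℂ}
    {Ω : Set E} (hΩ : IsOpen Ω) (hconn : IsPreconnected Ω) (hg : DifferentiableOn ℂ g Ω)
    {c : ℂ} {x₀ : E} {r : ℝ} (hr : 0 < r) (hbr : ball x₀ r ⊆ Ω)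
    (hgc : ∀ w ∈ ball x₀ r, g w = c) : ∀ z ∈ Ω, g z = c := by
  set W : Set E := {z | z ∈ Ω ∧ ∃ ρ > 0, ball z ρ ⊆ Ω ∧ ∀ w ∈ ball z ρ, g w = c} with hWdef
  have hWo : IsOpen W := by
    rw [Metric.isOpen_iff]
    rintro z ⟨hzΩ, ρ, hρ, hρΩ, hρc⟩
    refine ⟨ρ, hρ, fun w hw => ?_⟩
    have hd : dist w z < ρ := mem_ball.mp hw
    refine ⟨hρΩ hw, ρ - dist w z, by linarith, ?_, ?_⟩
    · exact (ball_subset_ball' (by linarith)).trans hρΩ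
    · intro p hp
      exact hρc p (ball_subset_ball' (by linarith [mem_ball.mp hp]) hp)
  have hclo : Ω ∩ closure W ⊆ W := by
    rintro z ⟨hzΩ, hzcl⟩
    obtain ⟨ε, hε, hεΩ⟩ := Metric.isOpen_iff.mp hΩ z hzΩ
    obtain ⟨z', hz'W, hz'ball⟩ : ∃ z', z' ∈ W ∧ z' ∈ ball z ε := by
      have := Metric.mem_closure_iff.mp hzcl ε hε
      obtain ⟨z', hz'W, hd⟩ := this
      exact ⟨z', hz'W, by rwa [mem_ball, dist_comm]⟩
    obtain ⟨hz'Ω, ρ, hρ, hρΩ, hρc⟩ := hz'W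
    set ρ' : ℝ := min ρ (ε - dist z' z) with hρ'def
    have hρ'pos : 0 < ρ' := lt_min hρ (by linarith [mem_ball.mp hz'ball])
    have hkey : ∀ p ∈ ball z ε, g p = c := by
      intro p hp
      apply aux_slice (B := ball z ε) isOpen_ball (convex_ball z ε)
        (hg.mono hεΩ) hρ'pos hz'ball _ hp
      intro w hw
      exact hρc w (ball_subset_ball (min_le_left _ _) hw)
    exact ⟨hzΩ, ε, hε, hεΩ, hkey⟩
  intro z hzΩ
  have hWclosure_subset : Ω ⊆ closure W := by
    by_contra hcon
    rw [Set.not_subset] at hcon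
    obtain ⟨y, hyΩ, hycl⟩ := hcon
    have hsub : Ω ⊆ W ∪ (closure W)ᶜ := by
      intro w hw
      by_cases hwc : w ∈ closure W
      · exact Or.inl (hclo ⟨hw, hwc⟩)
      · exact Or.inr hwc
    have hWne : (Ω ∩ W).Nonempty := ⟨x₀, hbr (mem_ball_self hr), ⟨hbr (mem_ball_self hr), r, hr, hbr, hgc⟩⟩
    have hvne : (Ω ∩ (closure W)ᶜ).Nonempty := ⟨y, hyΩ, hycl⟩
    obtain ⟨w, hwΩ, hwW, hwc⟩ := hconn W (closure W)ᶜ hWo (isClosed_closure.isOpen_compl)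
      hsub hWne hvne
    exact hwc (subset_closure hwW)
  have hzW : z ∈ W := hclo ⟨hzΩ, hWclosure_subset hzΩ⟩
  obtain ⟨_, ρ, hρ, _, hρc⟩ := hzW
  exact hρc z (mem_ball_self hρ)

theorem stmt11 (n : ℕ) (Ω : Set (EuclideanSpace ℂ (Fin n))) (hΩ : IsOpen Ω)
    (hconn : IsConnected Ω) (h0 : (0 : EuclideanSpace ℂ (Fin n)) ∈ Ω)
    (a : Fin n → ℝ) (ha : ∀ j, 0 < a j)
    (hinv : ∀ (θ : ℝ), ∀ z ∈ Ω,
      (WithLp.toLp 2 (fun j => Complex.exp (Complex.I * (a j) * θ) * z j) : EuclideanSpace ℂ (Fin n)) ∈ Ω)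
    (g : EuclideanSpace ℂ (Fin n) → ℂ) (hg : DifferentiableOn ℂ g Ω)
    (hginv : ∀ (θ : ℝ), ∀ z ∈ Ω,
      g (WithLp.toLp 2 (fun j => Complex.exp (Complex.I * (a j) * θ) * z j) : EuclideanSpace ℂ (Fin n)) = g z) :
    ∀ z ∈ Ω, g z = g 0 := by
  obtain ⟨r, hr, hball⟩ := Metric.isOpen_iff.mp hΩ 0 h0
  have hnear : ∀ w ∈ ball (0 : EuclideanSpace ℂ (Fin n)) r, g w = g 0 := fun w hw =>
    aux_near_zero n Ω hΩ a ha g hg hginv r hr hball h0 w hw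
  exact aux_propagate hΩ hconn.isPreconnected hg hr hball hnear
end
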